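/- A minimal valid function π is a weak facet if and only if for every minimal valid function π', the inclusion E(π) ⊆ E(π') implies E(π) = E(π'). -/

import Mathlib

/-- A finite-support function `y : ℝ → ℕ` is feasible if `∑ r, r·y(r) − f ∈ ℤ`. -/
def Feasible (f : ℝ) (y : ℝ →₀ ℕ) : Prop :=
  ∃ z : ℤ, (∑ r ∈ y.support, r * (y r : ℝ)) - f = (z : ℝ)

/-- `π` is a valid function: nonnegative, and `∑ r, π(r)·y(r) ≥ 1` for every feasible `y`. -/
def Valid (f : ℝ) (π : ℝ → ℝ) : Prop :=
  (∀ x, 0 ≤ π x) ∧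
    ∀ y : ℝ →₀ ℕ, Feasible f y → 1 ≤ ∑ r ∈ y.support, π r * (y r : ℝ)

/-- A valid function is minimal if no other valid function is pointwise ≤ it. -/
def MinimalValid (f : ℝ) (π : ℝ → ℝ) : Prop :=
  Valid f π ∧ ¬ ∃ π' : ℝ → ℝ, Valid f π' ∧ (∀ x, π' x ≤ π x) ∧ π' ≠ π

/-- `P(π)`: the set of feasible `y` with `∑ r, π(r)·y(r) = 1`. -/
def Pset (f : ℝ) (π : ℝ → ℝ) : Set (ℝ →₀ ℕ) :=
  {y | Feasible f y ∧ ∑ r ∈ y.support, π r * (y r : ℝ) = 1}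

/-- `E(π) = {(x,y) : π(x) + π(y) = π(x+y)}`. -/
def Eset (π : ℝ → ℝ) : Set (ℝ × ℝ) :=
  {p | π p.1 + π p.2 = π (p.1 + p.2)}

/-- A valid function `π` is a facet if every valid `π'` with `P(π) ⊆ P(π')` equals `π`. -/
def IsFacet (f : ℝ) (π : ℝ → ℝ) : Prop :=
  Valid f π ∧ ∀ π' : ℝ → ℝ, Valid f π' → Pset f π ⊆ Pset f π' → π' = π

/-- A valid function `π` is a weak facet if every valid `π'` with `P(π) ⊆ P(π')`
has `P(π) = P(π')`. -/
def IsWeakFacet (f : ℝ) (π : ℝ → ℝ) : Prop :=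
  Valid f π ∧ ∀ π' : ℝ → ℝ, Valid f π' → Pset f π ⊆ Pset f π' → Pset f π = Pset f π'

/-- A valid function `π` is extreme if whenever `π = (π¹ + π²)/2` with `π¹, π²` valid,
then `π¹ = π² = π`. -/
def ExtremeFunc (f : ℝ) (π : ℝ → ℝ) : Prop :=
  Valid f π ∧ ∀ π₁ π₂ : ℝ → ℝ, Valid f π₁ → Valid f π₂ →
    (∀ x, π x = (π₁ x + π₂ x) / 2) → π₁ = π ∧ π₂ = π

/-- `π` is piecewise linear: there is a closed, discrete set `B ⊆ ℝ` of breakpoints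
such that `π` is affine on each connected component of `ℝ \ B`. -/
def PiecewiseLinear (π : ℝ → ℝ) : Prop :=
  ∃ B : Set ℝ, IsClosed B ∧
    (∀ x ∈ B, ∃ ε > (0 : ℝ), ∀ y ∈ B, |y - x| < ε → y = x) ∧
    (∀ x ∉ B, ∃ a b : ℝ, ∀ z ∈ connectedComponentIn Bᶜ x, π z = a * z + b)

/-- `π` is continuous piecewise linear. -/
def ContPiecewiseLinear (π : ℝ → ℝ) : Prop :=
  PiecewiseLinear π ∧ Continuous π

open Finsupp

noncomputable section WF6

/-- weighted sum -/
def wS (g : ℝ → ℝ) (y : ℝ →₀ ℕ) : ℝ := ∑ r ∈ y.support, g r * (y r : ℝ)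

lemma wS_def (g : ℝ → ℝ) (y : ℝ →₀ ℕ) : wS g y = y.sum fun r n => g r * (n : ℝ) := rfl

lemma wS_add (g : ℝ → ℝ) (y z : ℝ →₀ ℕ) : wS g (y + z) = wS g y + wS g z := by
  simp only [wS_def]
  exact Finsupp.sum_add_index' (by simp) (by intros; push_cast; ring)

lemma wS_single (g : ℝ → ℝ) (a : ℝ) (n : ℕ) : wS g (Finsupp.single a n) = g a * n := by
  simp only [wS_def]
  exact Finsupp.sum_single_index (by simp)

lemma wS_split (g : ℝ → ℝ) (y : ℝ →₀ ℕ) (a : ℝ) :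
    wS g y = wS g (y.erase a) + g a * (y a : ℝ) := by
  conv_lhs => rw [← Finsupp.erase_add_single a y]
  rw [wS_add, wS_single]

lemma wS_erase (g : ℝ → ℝ) (y : ℝ →₀ ℕ) (a : ℝ) :
    wS g (y.erase a) = wS g y - g a * (y a : ℝ) := by
  rw [wS_split g y a]; ring

lemma wS_congr {g g' : ℝ → ℝ} (y : ℝ →₀ ℕ) (h : ∀ r ∈ y.support, g r = g' r) :
    wS g y = wS g' y :=
  Finset.sum_congr rfl fun r hr => by rw [h r hr]

lemma wS_nonneg {g : ℝ → ℝ} (hg : ∀ x, 0 ≤ g x) (y : ℝ →₀ ℕ) : 0 ≤ wS g y :=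
  Finset.sum_nonneg fun r _ => mul_nonneg (hg r) (by positivity)



lemma feasible_iff (f : ℝ) (y : ℝ →₀ ℕ) :
    Feasible f y ↔ ∃ z : ℤ, wS (fun r => r) y - f = (z : ℝ) := Iff.rfl

lemma valid_iff (f : ℝ) (π : ℝ → ℝ) :
    Valid f π ↔ (∀ x, 0 ≤ π x) ∧ ∀ y, Feasible f y → 1 ≤ wS π y := Iff.rfl

-- list expansion
def expandF (y : ℝ →₀ ℕ) : List ℝ := y.support.toList.flatMap fun r => List.replicate (y r) r

lemma flat_sum (g : ℝ → ℝ) (y : ℝ → ℕ) (l : List ℝ) :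
    ((l.flatMap fun r => List.replicate (y r) r).map g).sum
      = (l.map fun r => g r * (y r : ℝ)).sum := by
  induction l with
  | nil => simp
  | cons a t ih =>
      simp [List.flatMap_cons, List.map_append, List.sum_append, ih, List.map_replicate,
        List.sum_replicate, nsmul_eq_mul, mul_comm]

lemma expandF_map_sum (g : ℝ → ℝ) (y : ℝ →₀ ℕ) : ((expandF y).map g).sum = wS g y := by
  rw [expandF, flat_sum, Finset.sum_map_toList]
  rfl

lemma expandF_sum (y : ℝ →₀ ℕ) : (expandF y).sum = wS (fun r => r) y := by
  rw [← expandF_map_sum (fun r => r) y, List.map_id']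

lemma chain_le {π : ℝ → ℝ} (hsub : ∀ a b, π (a + b) ≤ π a + π b) (h0 : π 0 = 0) :
    ∀ l : List ℝ, π l.sum ≤ (l.map π).sum := by
  intro l
  induction l with
  | nil => simp [h0]
  | cons a t ih =>
      simp only [List.sum_cons, List.map_cons]
      calc π (a + t.sum) ≤ π a + π t.sum := hsub a t.sum
        _ ≤ π a + (t.map π).sum := by linarith

lemma chain_eq {π π' : ℝ → ℝ} (hsub : ∀ a b, π (a + b) ≤ π a + π b) (h0 : π 0 = 0)
    (hE : Eset π ⊆ Eset π') :
    ∀ l : List ℝ, (l.map π).sum = π l.sum → (l.map π').sum = π' l.sum := by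
  intro l
  induction l with
  | nil =>
      intro h
      have h00 : ((0 : ℝ), (0 : ℝ)) ∈ Eset π := by
        simp only [Eset, Set.mem_setOf_eq, add_zero, h0]
      have := hE h00
      simp only [Eset, Set.mem_setOf_eq, add_zero] at this
      simp only [List.map_nil, List.sum_nil]
      linarith
  | cons a t ih =>
      intro h
      simp only [List.map_cons, List.sum_cons] at h ⊢
      have h1 : π (a + t.sum) ≤ π a + π t.sum := hsub a t.sum
      have h2 : π t.sum ≤ (t.map π).sum := chain_le hsub h0 t
      have ht : (t.map π).sum = π t.sum := by linarith
      have hadd : (a, t.sum) ∈ Eset π := by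
        simp only [Eset, Set.mem_setOf_eq]; linarith
      have hadd' := hE hadd
      simp only [Eset, Set.mem_setOf_eq] at hadd'
      rw [ih ht, hadd']

section MinProps

variable {f : ℝ} {π : ℝ → ℝ}

lemma eq_of_valid_le (hπ : MinimalValid f π) {π' : ℝ → ℝ} (h' : Valid f π')
    (hle : ∀ x, π' x ≤ π x) : π' = π := by
  by_contra hne
  exact hπ.2 ⟨π', h', hle, hne⟩

lemma min_nonneg' (hπ : MinimalValid f π) : ∀ x, 0 ≤ π x := hπ.1.1

lemma min_pi_zero (hπ : MinimalValid f π) : π 0 = 0 := by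
  set π₃ : ℝ → ℝ := fun x => if x = 0 then 0 else π x with hπ₃
  have hval : Valid f π₃ := by
    constructor
    · intro x
      by_cases hx : x = 0
      · simp [hπ₃, hx]
      · simp only [hπ₃, if_neg hx]; exact hπ.1.1 x
    · intro y hy
      have hfe : Feasible f (y.erase 0) := by
        obtain ⟨z, hz⟩ := hy
        refine ⟨z, ?_⟩
        have hz' : wS (fun r => r) y - f = (z:ℝ) := hz
        show wS (fun r => r) (y.erase 0) - f = (z:ℝ)
        rw [wS_erase]
        simpa using hz' 
      have h1 : (1 : ℝ) ≤ wS π (y.erase 0) := hπ.1.2 _ hfe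
      have h2 : wS π₃ y = wS π₃ (y.erase 0) + π₃ 0 * (y 0 : ℝ) := wS_split π₃ y 0
      have h3 : wS π₃ (y.erase 0) = wS π (y.erase 0) := by
        apply wS_congr
        intro r hr
        have hne : r ≠ 0 := by
          rw [Finsupp.support_erase] at hr
          exact Finset.ne_of_mem_erase hr
        simp [hπ₃, hne]
      have h4 : π₃ 0 = 0 := by simp [hπ₃]
      calc (1:ℝ) ≤ wS π (y.erase 0) := h1
        _ = wS π₃ y := by rw [h2, h3, h4]; ring
  have hle : ∀ x, π₃ x ≤ π x := by
    intro x
    by_cases hx : x = 0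
    · subst hx; simp [hπ₃, hπ.1.1 0]
    · simp [hπ₃, hx]
  have := eq_of_valid_le hπ hval hle
  have h0 : π₃ 0 = π 0 := by rw [this]
  simpa [hπ₃] using h0.symm

lemma min_le_one (hπ : MinimalValid f π) : ∀ x, π x ≤ 1 := by
  set π₄ : ℝ → ℝ := fun x => min (π x) 1 with hπ₄
  have hval : Valid f π₄ := by
    constructor
    · intro x; exact le_min (hπ.1.1 x) zero_le_one
    · intro y hy
      show (1:ℝ) ≤ wS π₄ y
      by_cases hex : ∃ r ∈ y.support, 1 ≤ π r
      · obtain ⟨r, hr, h1r⟩ := hex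
        have e : π₄ r = 1 := min_eq_right h1r
        have hterm : (1:ℝ) * (y r : ℝ) ≤ wS π₄ y := by
          have h5 := Finset.single_le_sum
            (f := fun i => π₄ i * (y i : ℝ))
            (fun i _ => mul_nonneg (le_min (hπ.1.1 i) zero_le_one) (by positivity)) hr
          have h5' : π₄ r * (y r : ℝ) ≤ wS π₄ y := h5
          rw [e] at h5'
          exact h5' 
        have hyr : (1:ℝ) ≤ (y r : ℝ) := by
          have := Finsupp.mem_support_iff.mp hr
          exact_mod_cast Nat.one_le_iff_ne_zero.mpr this
        linarith
      · push_neg at hex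
        have : wS π₄ y = wS π y := by
          apply wS_congr
          intro r hr
          simp [hπ₄, min_eq_left (le_of_lt (hex r hr))]
        rw [this]; exact hπ.1.2 y hy
  have hle : ∀ x, π₄ x ≤ π x := fun x => min_le_left _ _
  have heq := eq_of_valid_le hπ hval hle
  intro x
  have := congrFun heq x
  simpa [hπ₄] using min_eq_left_iff.mp this

lemma min_subadd (hπ : MinimalValid f π) : ∀ a b, π (a + b) ≤ π a + π b := by
  by_contra hcon
  push_neg at hcon
  obtain ⟨a, b, hab⟩ := hcon
  set π₂ : ℝ → ℝ := fun x => if x = a + b then π a + π b else π x with hπ₂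
  have hval : Valid f π₂ := by
    constructor
    · intro x
      by_cases hx : x = a + b <;>
        simp [hπ₂, hx, hπ.1.1 x, add_nonneg (hπ.1.1 a) (hπ.1.1 b)]
    · intro y hy
      show (1:ℝ) ≤ wS π₂ y
      set k : ℕ := y (a + b) with hk
      set y' : ℝ →₀ ℕ := y.erase (a + b) + Finsupp.single a k + Finsupp.single b k with hy'
      have hwS : ∀ g : ℝ → ℝ,
          wS g y' = wS g y - g (a + b) * (k : ℝ) + g a * k + g b * k := by
        intro g
        rw [hy', wS_add, wS_add, wS_single, wS_single, wS_erase]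
      have hfe : Feasible f y' := by
        obtain ⟨z, hz⟩ := hy
        refine ⟨z, ?_⟩
        have hz' : wS (fun r => r) y - f = (z:ℝ) := hz
        show wS (fun r => r) y' - f = (z:ℝ)
        rw [hwS (fun r => r)]
        rw [show (fun r : ℝ => r) = id from rfl] at *
        linarith
      have h1 : (1:ℝ) ≤ wS π y' := hπ.1.2 _ hfe
      have h2 : wS π₂ y = wS π y' := by
        rw [hwS π]
        rw [wS_split π₂ y (a+b), wS_split π y (a+b)]
        have : wS π₂ (y.erase (a+b)) = wS π (y.erase (a+b)) := by
          apply wS_congr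
          intro r hr
          have hne : r ≠ a + b := by
            have := Finsupp.support_erase (a := a+b) (f := y)
            rw [this] at hr
            exact Finset.ne_of_mem_erase hr
          simp [hπ₂, hne]
        rw [this]
        have h2a : π₂ (a+b) = π a + π b := by simp [hπ₂]
        rw [h2a, ← hk]
        ring
      linarith
  have hle : ∀ x, π₂ x ≤ π x := by
    intro x
    by_cases hx : x = a + b
    · subst hx; simp [hπ₂, le_of_lt hab]
    · simp [hπ₂, hx]
  have heq := eq_of_valid_le hπ hval hle
  have := congrFun heq (a + b)
  simp only [hπ₂, if_pos rfl] at this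
  linarith

end MinProps

section MinProps2

variable {f : ℝ} {π : ℝ → ℝ}

lemma min_shift_le (hπ : MinimalValid f π) (t : ℤ) : ∀ x, π x ≤ π (x + t) := by
  set π₅ : ℝ → ℝ := fun x => min (π x) (π (x + t)) with hπ₅
  have hval : Valid f π₅ := by
    constructor
    · intro x; exact le_min (hπ.1.1 x) (hπ.1.1 _)
    · intro y hy
      show (1:ℝ) ≤ wS π₅ y
      set σ : ℝ → ℝ := fun r => if π (r + t) < π r then r + t else r with hσ
      set y' : ℝ →₀ ℕ := Finsupp.mapDomain σ y with hy'
      have hmap : ∀ g : ℝ → ℝ, wS g y' = ∑ r ∈ y.support, g (σ r) * (y r : ℝ) := by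
        intro g
        rw [hy', wS_def]
        rw [Finsupp.sum_mapDomain_index (by simp) (by intros; push_cast; ring)]
        rfl
      set N : ℕ := ∑ r ∈ y.support, (if π (r + t) < π r then 1 else 0) * y r with hN
      have hNr : (N : ℝ) = ∑ r ∈ y.support, (if π (r + t) < π r then (1:ℝ) else 0) * (y r : ℝ) := by
        rw [hN]
        push_cast
        apply Finset.sum_congr rfl
        intro r _
        by_cases hc : π (r + t) < π r <;> simp [hc]
      have hdiff : wS (fun r => r) y' = wS (fun r => r) y + (t : ℝ) * N := by
        rw [hmap (fun r => r), hNr, wS, Finset.mul_sum, ← Finset.sum_add_distrib]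
        apply Finset.sum_congr rfl
        intro r _
        by_cases hc : π (r + t) < π r <;> simp [hσ, hc] <;> ring
      have hfe : Feasible f y' := by
        obtain ⟨z, hz⟩ := hy
        refine ⟨z + t * N, ?_⟩
        have hz' : wS (fun r => r) y - f = (z:ℝ) := hz
        show wS (fun r => r) y' - f = ((z + t * N : ℤ) : ℝ)
        rw [hdiff]
        push_cast
        linarith
      have h1 : (1:ℝ) ≤ wS π y' := hπ.1.2 _ hfe
      have h2 : wS π y' = wS π₅ y := by
        rw [hmap π, wS]
        apply Finset.sum_congr rfl
        intro r _
        by_cases hc : π (r + t) < π r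
        · simp [hσ, hπ₅, hc, min_eq_right (le_of_lt hc)]
        · simp [hσ, hπ₅, hc, min_eq_left (not_lt.mp hc)]
      linarith
  have hle : ∀ x, π₅ x ≤ π x := fun x => min_le_left _ _
  have heq := eq_of_valid_le hπ hval hle
  intro x
  have := congrFun heq x
  simpa [hπ₅] using min_eq_left_iff.mp this

lemma min_periodic (hπ : MinimalValid f π) (t : ℤ) (x : ℝ) : π (x + t) = π x := by
  have h1 := min_shift_le hπ t x
  have h2 := min_shift_le hπ (-t) (x + t)
  have : ((x : ℝ) + t) + ((-t : ℤ) : ℝ) = x := by push_cast; ring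
  rw [this] at h2
  linarith

lemma min_pi_f (hf : f ∈ Set.Ioo (0:ℝ) 1) (hπ : MinimalValid f π) : π f = 1 := by
  have hge : (1:ℝ) ≤ π f := by
    have hfe : Feasible f (Finsupp.single f 1) := by
      refine ⟨0, ?_⟩
      show wS (fun r => r) (Finsupp.single f 1) - f = ((0:ℤ):ℝ)
      rw [wS_single]
      push_cast; ring
    have h1 : (1:ℝ) ≤ wS π (Finsupp.single f 1) := hπ.1.2 _ hfe
    have h2 : wS π (Finsupp.single f 1) = π f := by rw [wS_single]; push_cast; ring
    linarith
  exact le_antisymm (min_le_one hπ f) hge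

lemma min_ncopies (hπ : MinimalValid f π) (a b : ℝ) :
    ∀ n : ℕ, π (a + n * b) ≤ π a + n * π b := by
  intro n
  induction n with
  | zero => simp
  | succ m ih =>
      have h1 : π (a + (m+1) * b) ≤ π (a + m * b) + π b := by
        have := min_subadd hπ (a + m * b) b
        rw [show a + (m:ℝ) * b + b = a + ((m:ℝ)+1) * b by ring] at this
        push_cast
        exact this
      push_cast
      push_cast at ih
      linarith

lemma min_wS_chain (hπ : MinimalValid f π) (y : ℝ →₀ ℕ) :
    π (wS (fun r => r) y) ≤ wS π y := by
  have h1 := chain_le (fun a b => min_subadd hπ a b) (min_pi_zero hπ) (expandF y)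
  rw [expandF_sum, expandF_map_sum] at h1
  exact h1

lemma min_symm (hf : f ∈ Set.Ioo (0:ℝ) 1) (hπ : MinimalValid f π) (x : ℝ) :
    π x + π (f - x) = 1 := by
  have hge : (1:ℝ) ≤ π x + π (f - x) := by
    have hfe : Feasible f (Finsupp.single x 1 + Finsupp.single (f - x) 1) := by
      refine ⟨0, ?_⟩
      show wS (fun r => r) (Finsupp.single x 1 + Finsupp.single (f-x) 1) - f = ((0:ℤ):ℝ)
      rw [wS_add, wS_single, wS_single]
      push_cast; ring
    have h1 : (1:ℝ) ≤ wS π (Finsupp.single x 1 + Finsupp.single (f-x) 1) := hπ.1.2 _ hfe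
    have h2 : wS π (Finsupp.single x 1 + Finsupp.single (f-x) 1) = π x + π (f - x) := by
      rw [wS_add, wS_single, wS_single]; push_cast; ring
    linarith
  by_contra hcon
  have hgt : 1 < π x + π (f - x) := lt_of_le_of_ne hge fun h => hcon h.symm
  set δ : ℝ := π x + π (f - x) - 1 with hδ
  have hδpos : 0 < δ := by linarith
  have hπx : δ ≤ π x := by
    have := min_le_one hπ (f - x)
    linarith
  set ε : ℝ := (π x / 2) * min 1 δ with hε
  have hεpos : 0 < ε := by
    apply mul_pos
    · linarith
    · exact lt_min one_pos hδpos
  have hεle : ε ≤ π x / 2 := by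
    have : min 1 δ ≤ 1 := min_le_left _ _
    nlinarith
  set π' : ℝ → ℝ := fun r => if r = x then π x - ε else π r with hπ'
  have hval : Valid f π' := by
    constructor
    · intro r
      by_cases hr : r = x
      · simp only [hπ', if_pos hr]; linarith
      · simp only [hπ', if_neg hr]; exact hπ.1.1 r
    · intro y hy
      show (1:ℝ) ≤ wS π' y
      set k : ℕ := y x with hk
      have hsplit : wS π' y = wS π y - ε * k := by
        rw [wS_split π' y x, wS_split π y x]
        have hc : wS π' (y.erase x) = wS π (y.erase x) := by
          apply wS_congr
          intro r hr
          rw [Finsupp.support_erase] at hr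
          have := Finset.ne_of_mem_erase hr
          simp [hπ', this]
        rw [hc]
        have : π' x = π x - ε := by simp [hπ']
        rw [this, ← hk]
        ring
      rcases Nat.eq_zero_or_pos k with hk0 | hkpos
      · have h1 := hπ.1.2 y hy
        rw [hsplit, hk0]
        simp only [Nat.cast_zero, mul_zero, sub_zero]
        exact h1
      · -- main case : k ≥ 1
        obtain ⟨z, hz⟩ := hy
        have hz' : wS (fun r => r) y - f = (z:ℝ) := hz
        -- the erase sum
        have herase_sum : wS (fun r => r) (y.erase x) = f - k * x + z := by
          rw [wS_erase]
          push_cast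
          rw [← hk]
          linarith
        have hbound1 : π (f - k * x) ≤ wS π (y.erase x) := by
          have h1 := min_wS_chain hπ (y.erase x)
          rw [herase_sum] at h1
          have h2 : π (f - k * x + z) = π (f - k * x) := min_periodic hπ z _
          rw [h2] at h1
          exact h1
        have hwpy : π (f - k * x) + k * π x ≤ wS π y := by
          rw [wS_split π y x, ← hk]
          have : (k:ℝ) * π x = π x * k := by ring
          linarith
        -- slack estimate
        have hcopies : π (f - x) ≤ π (f - k * x) + ((k - 1 : ℕ) : ℝ) * π x := by
          have h1 := min_ncopies hπ (f - k * x) x (k - 1)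
          have hcast : ((k - 1 : ℕ) : ℝ) = (k : ℝ) - 1 := by
            have h0 := Nat.cast_sub (R := ℝ) hkpos
            push_cast at h0 ⊢
            linarith [h0]
          rw [hcast] at h1 ⊢
          rw [show f - (k:ℝ) * x + ((k:ℝ) - 1) * x = f - x by ring] at h1
          exact h1
        have hcast : ((k - 1 : ℕ) : ℝ) = (k : ℝ) - 1 := by
          have h0 := Nat.cast_sub (R := ℝ) hkpos
          push_cast at h0 ⊢
          linarith [h0]
        rw [hcast] at hcopies
        have hslack1 : 1 + δ ≤ π (f - k * x) + k * π x := by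
          have : π x + π (f - x) = 1 + δ := by rw [hδ]; ring
          nlinarith [hcopies]
        have hnn : 0 ≤ π (f - k * x) := hπ.1.1 _
        have hkε : (k:ℝ) * ε ≤ π (f - k * x) + k * π x - 1 := by
          have hk1 : (1:ℝ) ≤ k := by exact_mod_cast hkpos
          rcases le_or_gt ((k:ℝ) * π x) 2 with hle2 | hgt2
          · have hminδ : min 1 δ ≤ δ := min_le_right _ _
            have h1 : (k:ℝ) * ε = ((k:ℝ) * π x / 2) * min 1 δ := by rw [hε]; ring
            have h2 : ((k:ℝ) * π x / 2) * min 1 δ ≤ 1 * min 1 δ := by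
              apply mul_le_mul_of_nonneg_right
              · linarith
              · positivity
            have h3 : (1:ℝ) * min 1 δ ≤ δ := by
              rw [one_mul]; exact hminδ
            linarith
          · have h1 : (k:ℝ) * ε ≤ (k:ℝ) * (π x / 2) := by
              apply mul_le_mul_of_nonneg_left hεle
              positivity
            nlinarith
        rw [hsplit]
        linarith
  have hle : ∀ r, π' r ≤ π r := by
    intro r
    by_cases hr : r = x
    · subst hr; simp only [hπ', if_pos rfl]; linarith
    · simp [hπ', hr]
  have heq := eq_of_valid_le hπ hval hle
  have := congrFun heq x
  simp only [hπ', if_pos rfl] at this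
  linarith

end MinProps2

section Correspond

variable {f : ℝ} {π π' : ℝ → ℝ}

lemma pset_iff (y : ℝ →₀ ℕ) : y ∈ Pset f π ↔ Feasible f y ∧ wS π y = 1 := Iff.rfl

lemma eset_iff (x y : ℝ) : (x, y) ∈ Eset π ↔ π x + π y = π (x + y) := Iff.rfl

/-- K3 : P-inclusion from E-inclusion for minimal functions -/
lemma pset_subset_of_eset_subset (hf : f ∈ Set.Ioo (0:ℝ) 1) (hπ : MinimalValid f π)
    (hπ' : MinimalValid f π') (hE : Eset π ⊆ Eset π') : Pset f π ⊆ Pset f π' := by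
  intro y hy
  rw [pset_iff] at hy ⊢
  obtain ⟨⟨z, hz⟩, hsum⟩ := hy
  refine ⟨⟨z, hz⟩, ?_⟩
  have hz' : wS (fun r => r) y - f = (z:ℝ) := hz
  have hls : (expandF y).sum = f + z := by rw [expandF_sum]; linarith
  have hchain : ((expandF y).map π).sum = π (expandF y).sum := by
    rw [expandF_map_sum, hsum, hls]
    rw [show f + (z:ℝ) = f + z from rfl]
    rw [min_periodic hπ z f, min_pi_f hf hπ]
  have := chain_eq (fun a b => min_subadd hπ a b) (min_pi_zero hπ) hE (expandF y) hchain
  rw [expandF_map_sum, hls, min_periodic hπ' z f, min_pi_f hf hπ'] at this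
  exact this

/-- the triple finsupp -/
def tripleF (f x y : ℝ) : ℝ →₀ ℕ :=
  Finsupp.single x 1 + Finsupp.single y 1 + Finsupp.single (f - x - y) 1

lemma tripleF_wS (f x y : ℝ) (g : ℝ → ℝ) :
    wS g (tripleF f x y) = g x + g y + g (f - x - y) := by
  rw [tripleF, wS_add, wS_add, wS_single, wS_single, wS_single]
  push_cast; ring

lemma tripleF_feasible (f x y : ℝ) : Feasible f (tripleF f x y) := by
  refine ⟨0, ?_⟩
  show wS (fun r => r) (tripleF f x y) - f = ((0:ℤ):ℝ)
  rw [tripleF_wS]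
  push_cast; ring

/-- K1 -/
lemma triple_mem_pset (hf : f ∈ Set.Ioo (0:ℝ) 1) (hπ : MinimalValid f π) {x y : ℝ}
    (hxy : (x, y) ∈ Eset π) : tripleF f x y ∈ Pset f π := by
  rw [pset_iff, tripleF_wS]
  refine ⟨tripleF_feasible f x y, ?_⟩
  rw [eset_iff] at hxy
  have hs := min_symm hf hπ (x + y)
  rw [show f - (x + y) = f - x - y by ring] at hs
  linarith

/-- K2 -/
lemma eset_of_triple_mem (hf : f ∈ Set.Ioo (0:ℝ) 1) (hπ : MinimalValid f π) {x y : ℝ}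
    (ht : tripleF f x y ∈ Pset f π) : (x, y) ∈ Eset π := by
  rw [pset_iff, tripleF_wS] at ht
  rw [eset_iff]
  have hs := min_symm hf hπ (x + y)
  rw [show f - (x + y) = f - x - y by ring] at hs
  linarith [ht.2]

end Correspond

section ZornPart

lemma chain_finset_min {β : Type*} (c : Set (ℝ → ℝ)) (hc : IsChain (· ≤ ·) c)
    (g0 : ℝ → ℝ) (hg0 : g0 ∈ c) (S : Finset β) (gr : β → ℝ → ℝ)
    (hgr : ∀ r ∈ S, gr r ∈ c) : ∃ g ∈ c, ∀ r ∈ S, g ≤ gr r := by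
  classical
  induction S using Finset.induction_on with
  | empty => exact ⟨g0, hg0, by simp⟩
  | insert a S hnotmem ih =>
      obtain ⟨g, hgc, hgle⟩ := ih fun r hr => hgr r (Finset.mem_insert_of_mem hr)
      have hga : gr a ∈ c := hgr a (Finset.mem_insert_self a S)
      rcases hc.total hgc hga with h | h
      · refine ⟨g, hgc, ?_⟩
        intro r hr
        rcases Finset.mem_insert.mp hr with rfl | hr
        · exact h
        · exact hgle r hr
      · refine ⟨gr a, hga, ?_⟩
        intro r hr
        rcases Finset.mem_insert.mp hr with rfl | hr
        · exact le_refl _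
        · exact le_trans h (hgle r hr)

lemma exists_minimal_le (f : ℝ) (hf : f ∈ Set.Ioo (0:ℝ) 1) (π' : ℝ → ℝ)
    (hv : Valid f π') : ∃ m : ℝ → ℝ, MinimalValid f m ∧ ∀ x, m x ≤ π' x := by
  classical
  set s : Set ((ℝ → ℝ)ᵒᵈ) :=
    {g | Valid f (OrderDual.ofDual g) ∧ ∀ x, OrderDual.ofDual g x ≤ π' x} with hs
  have hzorn := zorn_le_nonempty₀ s ?ih (OrderDual.toDual π') ⟨hv, fun x => le_refl _⟩
  case ih =>
    intro c hcs hchain y₀ hy₀c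
    -- the pointwise infimum
    set D : Set (ℝ → ℝ) := OrderDual.ofDual '' c with hD
    have hDchain : IsChain (· ≤ ·) D := by
      rintro _ ⟨p, hp, rfl⟩ _ ⟨q, hq, rfl⟩ hne
      have hne' : p ≠ q := fun h => hne (by rw [h])
      rcases hchain hp hq hne' with h | h
      · exact Or.inr h
      · exact Or.inl h
    have hDval : ∀ g ∈ D, Valid f g ∧ ∀ x, g x ≤ π' x := by
      rintro _ ⟨p, hp, rfl⟩
      exact hcs hp
    have hy₀D : OrderDual.ofDual y₀ ∈ D := ⟨y₀, hy₀c, rfl⟩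
    set m : ℝ → ℝ := fun x => sInf ((fun g : ℝ → ℝ => g x) '' D) with hm
    have hne : ∀ x : ℝ, ((fun g : ℝ → ℝ => g x) '' D).Nonempty :=
      fun x => ⟨_, ⟨_, hy₀D, rfl⟩⟩
    have hbdd : ∀ x : ℝ, BddBelow ((fun g : ℝ → ℝ => g x) '' D) := by
      intro x
      refine ⟨0, ?_⟩
      rintro _ ⟨g, hg, rfl⟩
      exact (hDval g hg).1.1 x
    have hmle : ∀ g ∈ D, ∀ x, m x ≤ g x := by
      intro g hg x
      exact csInf_le (hbdd x) ⟨g, hg, rfl⟩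
    have hmnonneg : ∀ x, 0 ≤ m x := by
      intro x
      apply le_csInf (hne x)
      rintro _ ⟨g, hg, rfl⟩
      exact (hDval g hg).1.1 x
    have hmval : Valid f m := by
      refine ⟨hmnonneg, ?_⟩
      intro y hy
      show (1:ℝ) ≤ wS m y
      by_contra hcon
      push_neg at hcon
      -- support is nonempty
      have hSne : y.support.Nonempty := by
        by_contra hemp
        rw [Finset.not_nonempty_iff_eq_empty] at hemp
        obtain ⟨z, hz⟩ := hy
        rw [hemp] at hz
        simp only [Finset.sum_empty, zero_sub] at hz
        have h1 : (-1:ℝ) < z := by rw [← hz]; simp; linarith [hf.2]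
        have h2 : (z:ℝ) < 0 := by rw [← hz]; simp; linarith [hf.1]
        have h1' : (-1:ℤ) < z := by exact_mod_cast h1
        have h2' : z < 0 := by exact_mod_cast h2
        omega
      set δ : ℝ := 1 - wS m y with hδ
      have hδpos : 0 < δ := by rw [hδ]; linarith
      set T : ℝ := ∑ r ∈ y.support, (y r : ℝ) with hT
      have hTnonneg : 0 ≤ T := Finset.sum_nonneg fun r _ => by positivity
      set ε : ℝ := δ / (T + 1) with hε
      have hεpos : 0 < ε := by positivity
      -- choose g_r for each r
      have hchoice : ∀ r : ℝ, ∃ g ∈ D, g r < m r + ε := by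
        intro r
        have : m r < m r + ε := by linarith
        obtain ⟨b, ⟨g, hg, rfl⟩, hb⟩ := exists_lt_of_csInf_lt (hne r) this
        exact ⟨g, hg, hb⟩
      choose gr hgrD hgrlt using hchoice
      obtain ⟨g₀, hg₀D, hg₀le⟩ := chain_finset_min D hDchain _ hy₀D y.support gr
        (fun r _ => hgrD r)
      have hg₀val : (1:ℝ) ≤ wS g₀ y := (hDval g₀ hg₀D).1.2 y hy
      have hsum : wS g₀ y ≤ wS m y + ε * T := by
        rw [hT, Finset.mul_sum, wS, wS, ← Finset.sum_add_distrib]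
        apply Finset.sum_le_sum
        intro r hr
        have h1 : g₀ r ≤ gr r r := hg₀le r hr r
        have h2 : gr r r < m r + ε := hgrlt r
        have : g₀ r ≤ m r + ε := le_of_lt (lt_of_le_of_lt h1 h2)
        have hyr : (0:ℝ) ≤ (y r : ℝ) := by positivity
        nlinarith
      have hεT : ε * T < δ := by
        rw [hε]
        rw [div_mul_eq_mul_div, div_lt_iff₀ (by linarith)]
        nlinarith
      linarith [hδpos, hεT, hsum, hg₀val]
    refine ⟨OrderDual.toDual m, ⟨hmval, fun x => le_trans (hmle _ hy₀D x) ((hcs hy₀c).2 x)⟩, ?_⟩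
    intro z hz
    show OrderDual.ofDual (OrderDual.toDual m) ≤ OrderDual.ofDual z
    intro x
    exact hmle _ ⟨z, hz, rfl⟩ x
  obtain ⟨mD, hmD, hmax⟩ := hzorn
  set m : ℝ → ℝ := OrderDual.ofDual mD with hmdef
  refine ⟨m, ⟨hmax.prop.1, ?_⟩, hmax.prop.2⟩
  rintro ⟨h, hhval, hhle, hhne⟩
  have hhs : OrderDual.toDual h ∈ s := ⟨hhval, fun x => le_trans (hhle x) (hmax.prop.2 x)⟩
  have : mD ≤ OrderDual.toDual h := by
    show h ≤ m
    intro x; exact hhle x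
  have heq := le_antisymm (hmax.le_of_ge hhs this) this
  exact hhne (congrArg OrderDual.ofDual heq)

end ZornPart

end WF6

theorem stmt6 (f : ℝ) (hf : f ∈ Set.Ioo (0 : ℝ) 1) (π : ℝ → ℝ)
    (hπ : MinimalValid f π) :
    IsWeakFacet f π ↔
      ∀ π' : ℝ → ℝ, MinimalValid f π' → Eset π ⊆ Eset π' → Eset π = Eset π' := by
  constructor
  · intro hW π' hπ' hE
    have hP : Pset f π ⊆ Pset f π' := pset_subset_of_eset_subset hf hπ hπ' hE
    have hPeq : Pset f π = Pset f π' := hW.2 π' hπ'.1 hP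
    apply Set.Subset.antisymm hE
    rintro ⟨x, y⟩ hxy
    have ht : tripleF f x y ∈ Pset f π' := triple_mem_pset hf hπ' hxy
    rw [← hPeq] at ht
    exact eset_of_triple_mem hf hπ ht
  · intro hEcond
    refine ⟨hπ.1, ?_⟩
    intro π' hπ'val hP
    obtain ⟨m, hm, hmle⟩ := exists_minimal_le f hf π' hπ'val
    have hwle : ∀ y : ℝ →₀ ℕ, wS m y ≤ wS π' y := by
      intro y
      apply Finset.sum_le_sum
      intro r _
      have h1 := hmle r
      have h2 : (0:ℝ) ≤ (y r : ℝ) := by positivity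
      nlinarith
    have hPm : Pset f π ⊆ Pset f m := by
      intro y hy
      have hy' := hP hy
      rw [pset_iff] at hy hy' ⊢
      refine ⟨hy.1, ?_⟩
      have hge : (1:ℝ) ≤ wS m y := hm.1.2 y hy.1
      have := hwle y
      have h2 := hy'.2
      linarith
    have hEm : Eset π ⊆ Eset m := by
      rintro ⟨x, y⟩ hxy
      exact eset_of_triple_mem hf hm (hPm (triple_mem_pset hf hπ hxy))
    have hEeq : Eset π = Eset m := hEcond m hm hEm
    have hPmπ : Pset f m ⊆ Pset f π :=
      pset_subset_of_eset_subset hf hm hπ (by rw [← hEeq])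
    apply Set.Subset.antisymm hP
    intro y hy
    have hym : y ∈ Pset f m := by
      rw [pset_iff] at hy ⊢
      refine ⟨hy.1, ?_⟩
      have hge : (1:ℝ) ≤ wS m y := hm.1.2 y hy.1
      have := hwle y
      have h2 := hy.2
      linarith
    exact hPmπ hym
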